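/- (Integral Gronwall inequality with inhomogeneous term.) Let τ ≤ T be real numbers, c ≥ 0 a constant, V ∈ ℝ, let w : ℝ → ℝ be continuous and nonnegative on [τ,T], and let h : ℝ → ℝ be nonnegative and integrable on [τ,T]. If w(t) ≤ V + c·∫_τ^t w(s) ds + ∫_τ^t h(s) ds for every t ∈ [τ,T], then for every t ∈ [τ,T], w(t) ≤ V·exp(c(t−τ)) + ∫_τ^t exp(c(t−s))·h(s) ds. -/

import Mathlib

open MeasureTheory Set

lemma exp_fact (c a b : ℝ) :
    ∫ u in a..b, c * Real.exp (-(c*u)) = Real.exp (-(c*a)) - Real.exp (-(c*b)) := by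
  have hd : ∀ u : ℝ, HasDerivAt (fun x => -Real.exp (-(c*x))) (c * Real.exp (-(c*u))) u := by
    intro u
    have h1 : HasDerivAt (fun x : ℝ => -(c*x)) (-c) u := by
      simpa [Pi.neg_def] using ((hasDerivAt_id u).const_mul c).neg
    have h2 := (Real.hasDerivAt_exp (-(c*u))).comp u h1
    exact h2.neg.congr_deriv (by ring)
  have hcont : Continuous fun u : ℝ => c * Real.exp (-(c*u)) := by fun_prop
  rw [intervalIntegral.integral_eq_sub_of_hasDerivAt (fun u _ => hd u)
    (hcont.intervalIntegrable a b)]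
  ring

lemma key_swap (c τ t : ℝ) (h : ℝ → ℝ)
    (hint : IntegrableOn h (Icc τ t)) :
    ∫ u in Icc τ t, (c * Real.exp (-(c*u))) * (∫ s in Icc τ u, h s)
      = ∫ s in Icc τ t, (Real.exp (-(c*s)) - Real.exp (-(c*t))) * h s := by
  set μ := volume.restrict (Icc τ t) with hμ
  set q : ℝ → ℝ := fun u => c * Real.exp (-(c*u)) with hq
  set F : ℝ × ℝ → ℝ := fun p => {p : ℝ × ℝ | p.2 ≤ p.1}.indicator
    (fun p => q p.1 * h p.2) p with hF
  have hqc : Continuous q := by fun_prop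
  have hq_int : Integrable q μ := (hqc.continuousOn).integrableOn_Icc
  have hG_int : Integrable (fun p : ℝ × ℝ => q p.1 * h p.2) (μ.prod μ) :=
    hq_int.mul_prod hint
  have hS : MeasurableSet {p : ℝ × ℝ | p.2 ≤ p.1} :=
    measurableSet_le measurable_snd measurable_fst
  have hF_int : Integrable F (μ.prod μ) := hG_int.indicator hS
  have hswap := MeasureTheory.integral_integral_swap
    (f := fun u s => F (u, s)) (μ := μ) (ν := μ) hF_int
  have hL : ∫ u, (∫ s, F (u, s) ∂μ) ∂μ
      = ∫ u in Icc τ t, (c * Real.exp (-(c*u))) * (∫ s in Icc τ u, h s) := by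
    refine setIntegral_congr_fun measurableSet_Icc (fun u hu => ?_)
    have h1 : (fun s => F (u, s)) = (Iic u).indicator (fun s => q u * h s) := by
      ext s
      by_cases hs : s ≤ u
      · simp [hF, indicator_of_mem, hs, mem_Iic]
      · simp [hF, indicator_of_notMem, hs, mem_Iic]
    rw [h1, integral_indicator measurableSet_Iic, hμ,
      Measure.restrict_restrict measurableSet_Iic]
    have h2 : Iic u ∩ Icc τ t = Icc τ u := by
      ext x
      simp only [mem_inter_iff, mem_Iic, mem_Icc]
      constructor
      · rintro ⟨h1, h2, h3⟩; exact ⟨h2, h1⟩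
      · rintro ⟨h1, h2⟩; exact ⟨h2, h1, le_trans h2 hu.2⟩
    rw [h2, integral_const_mul]
  have hR : ∫ s, (∫ u, F (u, s) ∂μ) ∂μ
      = ∫ s in Icc τ t, (Real.exp (-(c*s)) - Real.exp (-(c*t))) * h s := by
    refine setIntegral_congr_fun measurableSet_Icc (fun s hs => ?_)
    have h1 : (fun u => F (u, s)) = (Ici s).indicator (fun u => q u * h s) := by
      ext u
      by_cases hu : s ≤ u
      · simp [hF, indicator_of_mem, hu, mem_Ici]
      · simp [hF, indicator_of_notMem, hu, mem_Ici]
    rw [h1, integral_indicator measurableSet_Ici, hμ,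
      Measure.restrict_restrict measurableSet_Ici]
    have h2 : Ici s ∩ Icc τ t = Icc s t := by
      ext x
      simp only [mem_inter_iff, mem_Ici, mem_Icc]
      constructor
      · rintro ⟨h1, h2, h3⟩; exact ⟨h1, h3⟩
      · rintro ⟨h1, h2⟩; exact ⟨h1, le_trans hs.1 h1, h2⟩
    rw [h2, integral_mul_const]
    have h3 : ∫ u in Icc s t, q u = Real.exp (-(c*s)) - Real.exp (-(c*t)) := by
      have he := exp_fact c s t
      rw [intervalIntegral.integral_of_le hs.2, ← integral_Icc_eq_integral_Ioc] at he
      exact he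
    rw [h3]
  rw [← hL, hswap, hR]

/-- Integral Gronwall inequality with inhomogeneous term. -/
theorem stmt_1 (τ T : ℝ) (hτT : τ ≤ T) (c : ℝ) (hc : 0 ≤ c) (V : ℝ)
    (w h : ℝ → ℝ)
    (hw_cont : ContinuousOn w (Icc τ T))
    (hw_nonneg : ∀ t ∈ Icc τ T, 0 ≤ w t)
    (hh_nonneg : ∀ t ∈ Icc τ T, 0 ≤ h t)
    (hh_int : IntegrableOn h (Icc τ T))
    (hineq : ∀ t ∈ Icc τ T,
      w t ≤ V + c * (∫ s in τ..t, w s) + ∫ s in τ..t, h s) :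
    ∀ t ∈ Icc τ T,
      w t ≤ V * Real.exp (c * (t - τ)) + ∫ s in τ..t, Real.exp (c * (t - s)) * h s := by
  intro t ht
  obtain ⟨htτ, htT⟩ := ht
  set y : ℝ → ℝ := fun u => ∫ s in τ..u, w s with hydef
  set H : ℝ → ℝ := fun u => ∫ s in τ..u, h s with hHdef
  have huIcc : uIcc τ T = Icc τ T := uIcc_of_le hτT
  have hw_int : IntegrableOn w (Icc τ T) := hw_cont.integrableOn_Icc
  have hy_cont : ContinuousOn y (Icc τ T) := by
    have := intervalIntegral.continuousOn_primitive_interval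
      (a := τ) (b := T) (μ := volume) (f := w) (by rwa [huIcc])
    rwa [huIcc] at this
  have hH_cont : ContinuousOn H (Icc τ T) := by
    have := intervalIntegral.continuousOn_primitive_interval
      (a := τ) (b := T) (μ := volume) (f := h) (by rwa [huIcc])
    rwa [huIcc] at this
  have hsub : Icc τ t ⊆ Icc τ T := Icc_subset_Icc le_rfl htT
  set z : ℝ → ℝ := fun u => Real.exp (-(c*u)) * y u with hzdef
  set z' : ℝ → ℝ := fun u => Real.exp (-(c*u)) * (w u - c * y u) with hz'def
  have hz_cont : ContinuousOn z (Icc τ t) :=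
    ((Real.continuous_exp.comp (continuous_const.mul continuous_id).neg).continuousOn).mul
      (hy_cont.mono hsub)
  have hz'_cont : ContinuousOn z' (Icc τ t) :=
    ((Real.continuous_exp.comp (continuous_const.mul continuous_id).neg).continuousOn).mul
      (((hw_cont.mono hsub)).sub ((continuousOn_const).mul (hy_cont.mono hsub)))
  have hz'_ii : IntervalIntegrable z' volume τ t :=
    hz'_cont.intervalIntegrable_of_Icc htτ
  have hexpd : ∀ u : ℝ, HasDerivAt (fun x => Real.exp (-(c*x)))
      (-c * Real.exp (-(c*u))) u := by
    intro u
    have h1 : HasDerivAt (fun x : ℝ => -(c*x)) (-c) u := by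
      simpa [Pi.neg_def] using ((hasDerivAt_id u).const_mul c).neg
    have h2 := (Real.hasDerivAt_exp (-(c*u))).comp u h1
    exact h2.congr_deriv (by ring)
  have hderiv : ∀ u ∈ Ioo τ t, HasDerivWithinAt z (z' u) (Ioi u) u := by
    intro u hu
    have huT : u ∈ Icc τ T := ⟨hu.1.le, hu.2.le.trans htT⟩
    have huT' : u < T := lt_of_lt_of_le hu.2 htT
    have hmem : Icc τ T ∈ nhdsWithin u (Ici u) := by
      refine mem_nhdsWithin.mpr ⟨Iio T, isOpen_Iio, huT', fun x hx => ?_⟩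
      exact ⟨le_trans hu.1.le hx.2, hx.1.le⟩
    have hmem' : Icc τ T ∈ nhdsWithin u (Ioi u) :=
      nhdsWithin_mono u Ioi_subset_Ici_self hmem
    have hyd : HasDerivWithinAt y (w u) (Ici u) u :=
      intervalIntegral.integral_hasDerivWithinAt_right
        (s := Ici u) (t := Ioi u)
        ((intervalIntegrable_iff_integrableOn_Icc_of_le hu.1.le).mpr
          (hw_int.mono (Icc_subset_Icc le_rfl huT.2) le_rfl))
        ⟨Icc τ T, hmem', hw_cont.aestronglyMeasurable measurableSet_Icc⟩
        ((hw_cont u huT).mono_of_mem_nhdsWithin hmem')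
    have := ((hexpd u).hasDerivWithinAt (s := Ici u)).mul hyd
    have h2 := this.mono Ioi_subset_Ici_self
    exact h2.congr_deriv (by simp only [hz'def]; ring)
  have hftc := intervalIntegral.integral_eq_sub_of_hasDeriv_right_of_le htτ hz_cont
    hderiv hz'_ii
  have hzτ : z τ = 0 := by simp [hzdef, hydef]
  set g : ℝ → ℝ := fun u => Real.exp (-(c*u)) * (V + H u) with hgdef
  have hg_cont : ContinuousOn g (Icc τ t) :=
    ((Real.continuous_exp.comp (continuous_const.mul continuous_id).neg).continuousOn).mul
      ((continuousOn_const).add (hH_cont.mono hsub))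
  have hg_ii : IntervalIntegrable g volume τ t := hg_cont.intervalIntegrable_of_Icc htτ
  have hmono : ∫ u in τ..t, z' u ≤ ∫ u in τ..t, g u := by
    refine intervalIntegral.integral_mono_on htτ hz'_ii hg_ii (fun u hu => ?_)
    have huT : u ∈ Icc τ T := hsub hu
    have h1 : w u ≤ V + c * y u + H u := hineq u huT
    have h2 : w u - c * y u ≤ V + H u := by linarith
    exact mul_le_mul_of_nonneg_left h2 (Real.exp_pos _).le
  have hyt : Real.exp (-(c*t)) * y t ≤ ∫ u in τ..t, g u := by
    have : z t = ∫ u in τ..t, z' u := by rw [hftc, hzτ, sub_zero]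
    calc Real.exp (-(c*t)) * y t = z t := rfl
      _ = ∫ u in τ..t, z' u := this
      _ ≤ _ := hmono
  -- integrability facts on [τ, t]
  have hhint_t : IntegrableOn h (Icc τ t) := hh_int.mono hsub le_rfl
  have hh_ii : IntervalIntegrable h volume τ t :=
    (intervalIntegrable_iff_integrableOn_Icc_of_le htτ).mpr hhint_t
  have hexp_cont : Continuous fun u : ℝ => Real.exp (-(c*u)) :=
    Real.continuous_exp.comp (continuous_const.mul continuous_id).neg
  have hE2_ii : IntervalIntegrable (fun u => Real.exp (-(c*u)) * H u) volume τ t :=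
    (hexp_cont.continuousOn.mul (hH_cont.mono hsub)).intervalIntegrable_of_Icc htτ
  have hE1_ii : IntervalIntegrable (fun u => Real.exp (-(c*u))) volume τ t :=
    hexp_cont.intervalIntegrable τ t
  -- split A
  have hA : ∫ u in τ..t, g u
      = V * (∫ u in τ..t, Real.exp (-(c*u))) + ∫ u in τ..t, Real.exp (-(c*u)) * H u := by
    rw [← intervalIntegral.integral_const_mul,
      ← intervalIntegral.integral_add (hE1_ii.const_mul V) hE2_ii]
    refine intervalIntegral.integral_congr (fun u _ => ?_)
    simp only [hgdef]
    ring
  -- the key identity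
  have hkey : c * (∫ u in τ..t, Real.exp (-(c*u)) * H u)
      = (∫ s in τ..t, Real.exp (-(c*s)) * h s) - Real.exp (-(c*t)) * H t := by
    have hks := key_swap c τ t h hhint_t
    have hL2 : ∫ u in Icc τ t, (c * Real.exp (-(c*u))) * (∫ s in Icc τ u, h s)
        = c * ∫ u in τ..t, Real.exp (-(c*u)) * H u := by
      have hcongr : ∀ u ∈ Icc τ t,
          (c * Real.exp (-(c*u))) * (∫ s in Icc τ u, h s)
            = c * (Real.exp (-(c*u)) * H u) := by
        intro u hu
        have : ∫ s in Icc τ u, h s = H u := by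
          show _ = ∫ s in τ..u, h s
          rw [intervalIntegral.integral_of_le hu.1, ← integral_Icc_eq_integral_Ioc]
        rw [this]
        ring
      rw [setIntegral_congr_fun measurableSet_Icc hcongr,
        integral_Icc_eq_integral_Ioc, ← intervalIntegral.integral_of_le htτ,
        intervalIntegral.integral_const_mul]
    have hR2 : ∫ s in Icc τ t, (Real.exp (-(c*s)) - Real.exp (-(c*t))) * h s
        = (∫ s in τ..t, Real.exp (-(c*s)) * h s) - Real.exp (-(c*t)) * H t := by
      rw [integral_Icc_eq_integral_Ioc, ← intervalIntegral.integral_of_le htτ]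
      have hsplit : ∀ s : ℝ, (Real.exp (-(c*s)) - Real.exp (-(c*t))) * h s
          = Real.exp (-(c*s)) * h s - Real.exp (-(c*t)) * h s := by intro s; ring
      rw [intervalIntegral.integral_congr (fun s _ => hsplit s),
        intervalIntegral.integral_sub
          (hh_ii.continuousOn_mul (hexp_cont.continuousOn))
          (hh_ii.const_mul _),
        intervalIntegral.integral_const_mul]
    rw [← hL2, hks, hR2]
  have hEV : c * (∫ u in τ..t, Real.exp (-(c*u)))
      = Real.exp (-(c*τ)) - Real.exp (-(c*t)) := by
    rw [← intervalIntegral.integral_const_mul]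
    exact exp_fact c τ t
  -- put everything together
  have hwt : w t ≤ V + c * y t + H t := hineq t ⟨htτ, htT⟩
  set A := ∫ u in τ..t, g u with hAdef
  have hyt2 : y t ≤ Real.exp (c*t) * A := by
    have h1 := mul_le_mul_of_nonneg_left hyt (Real.exp_pos (c*t)).le
    have h2 : Real.exp (c*t) * (Real.exp (-(c*t)) * y t) = y t := by
      rw [← mul_assoc, ← Real.exp_add]
      simp
    linarith [h1, h2.ge]
  have hcy : c * y t ≤ c * (Real.exp (c*t) * A) := mul_le_mul_of_nonneg_left hyt2 hc
  have hfinal : c * (Real.exp (c*t) * A)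
      = V * Real.exp (c * (t - τ)) - V
        + (∫ s in τ..t, Real.exp (c * (t - s)) * h s) - H t := by
    have hAexp : c * A = V * (Real.exp (-(c*τ)) - Real.exp (-(c*t)))
        + ((∫ s in τ..t, Real.exp (-(c*s)) * h s) - Real.exp (-(c*t)) * H t) := by
      rw [hA]
      linear_combination V * hEV + hkey
    have h3 : Real.exp (c*t) * (∫ s in τ..t, Real.exp (-(c*s)) * h s)
        = ∫ s in τ..t, Real.exp (c * (t - s)) * h s := by
      rw [← intervalIntegral.integral_const_mul]
      refine intervalIntegral.integral_congr (fun s _ => ?_)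
      rw [← mul_assoc, ← Real.exp_add]
      ring_nf
    have h4 : Real.exp (c*t) * Real.exp (-(c*τ)) = Real.exp (c * (t - τ)) := by
      rw [← Real.exp_add]; ring_nf
    have h5 : Real.exp (c*t) * Real.exp (-(c*t)) = 1 := by
      rw [← Real.exp_add]; simp
    have : c * (Real.exp (c*t) * A) = Real.exp (c*t) * (c * A) := by ring
    linear_combination Real.exp (c*t) * hAexp + V * h4 - V * h5 + h3 - H t * h5
  linarith [hwt, hcy, hfinal]
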